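/- Let Σ be a finite alphabet with a partial order ≤, and let Σ̃ = Σ ∪ {0} (with 0 a fresh letter) be partially ordered by extending ≤ so that σ < 0 for all σ ∈ Σ. Then for any language L ⊆ Σ*, the language (L·{0})* ⊆ Σ̃* has exponential antichain growth (with respect to the lexicographic order induced on Σ̃*) if and only if L is not a chain. -/

import Mathlib

open Filter
open scoped ENNReal

/-- The lexicographic partial order on words induced by a strict order `r` on letters:
`ε R w` for all `w`, and `(x :: w) R (y :: w')` iff `r x y`, or `x = y` and `w R w'`. -/
inductive LexR {α : Type*} (r : α → α → Prop) : List α → List α → Prop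
  | nil (w : List α) : LexR r [] w
  | head {x y : α} (w w' : List α) (h : r x y) : LexR r (x :: w) (y :: w')
  | cons (x : α) {w w' : List α} (h : LexR r w w') : LexR r (x :: w) (x :: w')

/-- Two words are comparable (`u ∼ v`) if `u R v` or `v R u`. -/
def LexComp {α : Type*} (r : α → α → Prop) (u v : List α) : Prop :=
  LexR r u v ∨ LexR r v u

/-- A language is an antichain if any two distinct words of it are incomparable. -/
def IsAntichainLang {α : Type*} (r : α → α → Prop) (L : Set (List α)) : Prop :=
  ∀ u ∈ L, ∀ v ∈ L, u ≠ v → ¬ LexComp r u v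

/-- A language is a quasiantichain if any two words of it are incomparable or one is a
prefix of the other. -/
def IsQuasiantichainLang {α : Type*} (r : α → α → Prop) (L : Set (List α)) : Prop :=
  ∀ u ∈ L, ∀ v ∈ L, u <+: v ∨ v <+: u ∨ ¬ LexComp r u v

/-- A language is a chain if any two words of it are comparable. -/
def IsChainLang {α : Type*} (r : α → α → Prop) (L : Set (List α)) : Prop :=
  ∀ u ∈ L, ∀ v ∈ L, LexComp r u v

/-- `|L|_{=n}`: the number of words of length `n` in `L`. -/
noncomputable def countLen {α : Type*} (L : Set (List α)) (n : ℕ) : ℕ :=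
  {w ∈ L | w.length = n}.ncard

/-- `L` has exponential growth of order `ε` if `limsup |L|_{=n} / 2^(εn) > 0`. -/
def ExpGrowthOrder {α : Type*} (L : Set (List α)) (ε : ℝ) : Prop :=
  0 < Filter.limsup (fun n : ℕ => (countLen L n : ℝ≥0∞) / (2 : ℝ≥0∞) ^ (ε * n)) Filter.atTop

/-- `L` has exponential growth if it has exponential growth of some order `ε > 0`. -/
def ExpGrowth {α : Type*} (L : Set (List α)) : Prop :=
  ∃ ε : ℝ, 0 < ε ∧ ExpGrowthOrder L ε

/-- `L` has polynomial growth if `limsup |L|_{=n} / n^k < ∞` for some `k`. -/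
def PolyGrowth {α : Type*} (L : Set (List α)) : Prop :=
  ∃ k : ℕ, Filter.limsup (fun n : ℕ => (countLen L n : ℝ≥0∞) / (n : ℝ≥0∞) ^ k) Filter.atTop < ⊤

/-- `L` is an antichain family if the set of words of length `n` in `L` is an antichain
for every `n`. -/
def AntichainFamily {α : Type*} (r : α → α → Prop) (L : Set (List α)) : Prop :=
  ∀ n : ℕ, IsAntichainLang r {w ∈ L | w.length = n}

/-- `L` has exponential antichain growth if some subset of `L` is an antichain family
with exponential growth. -/
def ExpAntichainGrowth {α : Type*} (r : α → α → Prop) (L : Set (List α)) : Prop :=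
  ∃ L' ⊆ L, AntichainFamily r L' ∧ ExpGrowth L'

/-- `L` has polynomial antichain growth if every antichain family contained in `L`
has polynomial growth. -/
def PolyAntichainGrowth {α : Type*} (r : α → α → Prop) (L : Set (List α)) : Prop :=
  ∀ L' ⊆ L, AntichainFamily r L' → PolyGrowth L'

/-- The Kleene star of a language: all finite concatenations of words of `L`. -/
def KStarLang {α : Type*} (L : Set (List α)) : Set (List α) :=
  {w | ∃ S : List (List α), (∀ u ∈ S, u ∈ L) ∧ w = S.flatten}

/-- The order on `Σ ∪ {0}`, extending the partial order on `Σ`, where the fresh letter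
`0` (encoded as `none`) lies strictly above every letter of `Σ`. -/
def extRel0 {Sigma : Type*} [PartialOrder Sigma] : Option Sigma → Option Sigma → Prop :=
  fun x y =>
    match x, y with
    | some a, some b => a < b
    | some _, none => True
    | _, _ => False

set_option linter.unusedSectionVars false

section aux
variable {α : Type*} {r : α → α → Prop}

lemma lexR_refl (w : List α) : LexR r w w := by
  induction w with
  | nil => exact LexR.nil _
  | cons x w ih => exact LexR.cons x ih

lemma lexR_cons_inv {x y : α} {w w' : List α} (h : LexR r (x :: w) (y :: w')) :
    r x y ∨ (x = y ∧ LexR r w w') := by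
  cases h with
  | head _ _ h => exact Or.inl h
  | cons _ h => exact Or.inr ⟨rfl, h⟩

lemma lexR_append_lift (p : List α) {w w' : List α} (h : LexR r w w') :
    LexR r (p ++ w) (p ++ w') := by
  induction p with
  | nil => exact h
  | cons x p ih => exact LexR.cons x ih

lemma lexR_strip (hirr : ∀ x, ¬ r x x) (p : List α) {w w' : List α}
    (h : LexR r (p ++ w) (p ++ w')) : LexR r w w' := by
  induction p with
  | nil => exact h
  | cons x p ih =>
    rcases lexR_cons_inv h with h' | ⟨_, h'⟩
    · exact absurd h' (hirr x)
    · exact ih h'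

lemma lexComp_append_lift (p : List α) {w w' : List α} (h : LexComp r w w') :
    LexComp r (p ++ w) (p ++ w') := by
  rcases h with h | h
  · exact Or.inl (lexR_append_lift p h)
  · exact Or.inr (lexR_append_lift p h)

lemma lexComp_strip (hirr : ∀ x, ¬ r x x) (p : List α) {w w' : List α}
    (h : LexComp r (p ++ w) (p ++ w')) : LexComp r w w' := by
  rcases h with h | h
  · exact Or.inl (lexR_strip hirr p h)
  · exact Or.inr (lexR_strip hirr p h)

lemma lexComp_symm {u v : List α} (h : LexComp r u v) : LexComp r v u := h.symm

end aux

section sigma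
variable {Sigma : Type*} [PartialOrder Sigma]

lemma extRel0_irrefl : ∀ x : Option Sigma, ¬ extRel0 x x := by
  rintro (_ | a) h
  · exact h
  · exact lt_irrefl a h

/-- Sub-lemma B -/
lemma comp_of_lexR {u v : List Sigma} (h : LexR (· < ·) u v) (hne : u ≠ v)
    (s t : List (Option Sigma)) :
    LexComp extRel0 (u.map some ++ none :: s) (v.map some ++ none :: t) := by
  induction h generalizing s t with
  | nil w =>
    cases w with
    | nil => exact absurd rfl hne
    | cons c w' => exact Or.inr (LexR.head _ _ trivial)
  | head w w' h => exact Or.inl (LexR.head _ _ h)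
  | cons x h ih =>
    have hne' := fun hh => hne (congrArg (x :: ·) hh)
    rcases ih hne' s t with h' | h'
    · exact Or.inl (LexR.cons _ h')
    · exact Or.inr (LexR.cons _ h')

/-- Sub-lemma F: incomparability lifts -/
lemma incomp_lift {u v : List Sigma} (h : ¬ LexComp (· < ·) u v)
    (s t : List (Option Sigma)) :
    (u.map some ++ none :: s) ≠ (v.map some ++ none :: t) ∧
      ¬ LexComp extRel0 (u.map some ++ none :: s) (v.map some ++ none :: t) := by
  induction u generalizing v with
  | nil => exact absurd (Or.inl (LexR.nil _)) h
  | cons a u' ih =>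
    cases v with
    | nil => exact absurd (Or.inr (LexR.nil _)) h
    | cons b v' =>
      by_cases hab : a = b
      · subst hab
        have h' : ¬ LexComp (· < ·) u' v' := by
          intro hc
          rcases hc with hc | hc
          · exact h (Or.inl (LexR.cons _ hc))
          · exact h (Or.inr (LexR.cons _ hc))
        obtain ⟨hne, hninc⟩ := ih h' (v := v')
        constructor
        · simp only [List.map_cons, List.cons_append, ne_eq, List.cons.injEq, true_and]
          exact hne
        · intro hc
          simp only [List.map_cons, List.cons_append] at hc
          apply hninc
          rcases hc with hc | hc
          · rcases lexR_cons_inv hc with h'' | ⟨_, h''⟩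
            · exact absurd h'' (extRel0_irrefl _)
            · exact Or.inl h''
          · rcases lexR_cons_inv hc with h'' | ⟨_, h''⟩
            · exact absurd h'' (extRel0_irrefl _)
            · exact Or.inr h''
      · have hnab : ¬ a < b := fun hh => h (Or.inl (LexR.head _ _ hh))
        have hnba : ¬ b < a := fun hh => h (Or.inr (LexR.head _ _ hh))
        constructor
        · simp only [List.map_cons, List.cons_append, ne_eq, List.cons.injEq]
          intro ⟨h1, _⟩
          exact hab (Option.some_injective _ h1)
        · intro hc
          simp only [List.map_cons, List.cons_append] at hc
          rcases hc with hc | hc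
          · rcases lexR_cons_inv hc with h'' | ⟨h'', _⟩
            · exact hnab h''
            · exact hab (Option.some_injective _ h'')
          · rcases lexR_cons_inv hc with h'' | ⟨h'', _⟩
            · exact hnba h''
            · exact hab (Option.some_injective _ h''.symm)

end sigma


section chainside
variable {Sigma : Type*} [PartialOrder Sigma] {L : Set (List Sigma)}

lemma block_append (u : List Sigma) (z : List (Option Sigma)) :
    (u.map some ++ [none]) ++ z = u.map some ++ none :: z := by
  simp

lemma chain_flatten (hL : IsChainLang (· < ·) L) :
    ∀ S T : List (List (Option Sigma)),
      (∀ b ∈ S, b ∈ (fun l : List Sigma => l.map some ++ [none]) '' L) →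
      (∀ b ∈ T, b ∈ (fun l : List Sigma => l.map some ++ [none]) '' L) →
      LexComp extRel0 S.flatten T.flatten := by
  intro S
  induction S with
  | nil => intro T _ _; exact Or.inl (LexR.nil _)
  | cons b S' ih =>
    intro T hS hT
    cases T with
    | nil => exact Or.inr (LexR.nil _)
    | cons c T' =>
      obtain ⟨u, hu, hbu⟩ := hS b List.mem_cons_self
      obtain ⟨v, hv, hcv⟩ := hT c List.mem_cons_self
      simp only [List.flatten_cons]
      by_cases huv : u = v
      · subst huv
        rw [← hbu, ← hcv]
        exact lexComp_append_lift _
          (ih T' (fun x hx => hS x (List.mem_cons_of_mem _ hx))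
            (fun x hx => hT x (List.mem_cons_of_mem _ hx)))
      · rcases hL u hu v hv with h | h
        · rw [← hbu, ← hcv, block_append, block_append]
          exact comp_of_lexR h huv _ _
        · rw [← hbu, ← hcv, block_append, block_append]
          exact lexComp_symm (comp_of_lexR h (Ne.symm huv) _ _)

lemma chain_kstar (hL : IsChainLang (· < ·) L) :
    IsChainLang extRel0 (KStarLang ((fun l : List Sigma => l.map some ++ [none]) '' L)) := by
  rintro w ⟨S, hS, rfl⟩ w' ⟨T, hT, rfl⟩
  exact chain_flatten hL S T hS hT

end chainside


section nonchain
variable {Sigma : Type*} [PartialOrder Sigma] {u v : List Sigma}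

/-- the word encoding a boolean string -/
def gword (u v : List Sigma) (s : List Bool) : List (Option Sigma) :=
  (s.map (fun b => if b then (u.map some ++ [none]) ++ (v.map some ++ [none])
    else (v.map some ++ [none]) ++ (u.map some ++ [none]))).flatten

lemma gword_nil : gword u v ([] : List Bool) = [] := rfl

lemma gword_cons (b : Bool) (s : List Bool) :
    gword u v (b :: s) = (if b then (u.map some ++ [none]) ++ (v.map some ++ [none])
      else (v.map some ++ [none]) ++ (u.map some ++ [none])) ++ gword u v s := by
  simp [gword]

lemma gword_length (s : List Bool) :
    (gword u v s).length = s.length * (u.length + v.length + 2) := by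
  induction s with
  | nil => simp [gword]
  | cons b s ih =>
    rw [gword_cons, List.length_append, ih]
    cases b <;> simp <;> ring

lemma gword_incomp (huv : ¬ LexComp (· < ·) u v) :
    ∀ s t : List Bool, s.length = t.length → s ≠ t →
      gword u v s ≠ gword u v t ∧ ¬ LexComp extRel0 (gword u v s) (gword u v t) := by
  have hvu : ¬ LexComp (· < ·) v u := fun h => huv (lexComp_symm h)
  intro s
  induction s with
  | nil => intro t hlen hne; cases t with
    | nil => exact absurd rfl hne
    | cons c t' => simp at hlen
  | cons b s' ih =>
    intro t hlen hne
    cases t with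
    | nil => simp at hlen
    | cons c t' =>
      simp only [List.length_cons, Nat.add_right_cancel_iff] at hlen
      rw [gword_cons, gword_cons]
      by_cases hbc : b = c
      · subst hbc
        have hne' : s' ≠ t' := fun hh => hne (by rw [hh])
        obtain ⟨h1, h2⟩ := ih t' hlen hne'
        refine ⟨fun hh => h1 (List.append_cancel_left hh), fun hh => h2 ?_⟩
        exact lexComp_strip extRel0_irrefl _ hh
      · have H := incomp_lift huv (List.map some v ++ none :: gword u v s')
            (List.map some u ++ none :: gword u v t')
        have H' := incomp_lift hvu (List.map some u ++ none :: gword u v s')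
            (List.map some v ++ none :: gword u v t')
        cases b <;> cases c
        · exact absurd rfl hbc
        · simpa [List.append_assoc, List.singleton_append] using H'
        · simpa [List.append_assoc, List.singleton_append] using H
        · exact absurd rfl hbc

lemma gword_mem_kstar {L : Set (List Sigma)} (hu : u ∈ L) (hv : v ∈ L) (s : List Bool) :
    gword u v s ∈ KStarLang ((fun l : List Sigma => l.map some ++ [none]) '' L) := by
  induction s with
  | nil => exact ⟨[], by simp, rfl⟩
  | cons b s ih =>
    obtain ⟨S, hS, hSf⟩ := ih
    refine ⟨(if b then [u.map some ++ [none], v.map some ++ [none]]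
      else [v.map some ++ [none], u.map some ++ [none]]) ++ S, ?_, ?_⟩
    · intro x hx
      rw [List.mem_append] at hx
      rcases hx with hx | hx
      · cases b <;> simp at hx <;> rcases hx with rfl | rfl
        · exact ⟨v, hv, rfl⟩
        · exact ⟨u, hu, rfl⟩
        · exact ⟨u, hu, rfl⟩
        · exact ⟨v, hv, rfl⟩
      · exact hS x hx
    · rw [gword_cons, List.flatten_append, ← hSf]
      cases b <;> simp

end nonchain


section counting
variable {Sigma : Type*} [PartialOrder Sigma] {u v : List Sigma}

lemma card_len_bool (k : ℕ) : {s : List Bool | s.length = k}.ncard = 2 ^ k := by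
  rw [← Nat.card_coe_set_eq]
  have h2 : Nat.card (List.Vector Bool k) = 2 ^ k := by
    rw [Nat.card_eq_fintype_card, card_vector, Fintype.card_bool]
  exact h2

lemma gword_count (huv : ¬ LexComp (· < ·) u v) (k : ℕ) :
    countLen (Set.range (gword u v)) (k * (u.length + v.length + 2)) = 2 ^ k := by
  set m := u.length + v.length + 2 with hm
  have hmpos : 0 < m := by omega
  have himg : {w ∈ Set.range (gword u v) | w.length = k * m} =
      gword u v '' {s : List Bool | s.length = k} := by
    ext w
    constructor
    · rintro ⟨⟨s, rfl⟩, hlen⟩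
      refine ⟨s, ?_, rfl⟩
      rw [gword_length] at hlen
      exact Nat.eq_of_mul_eq_mul_right hmpos hlen
    · rintro ⟨s, hs, rfl⟩
      exact ⟨⟨s, rfl⟩, by rw [gword_length, hs]⟩
  have hinj : Set.InjOn (gword u v) {s : List Bool | s.length = k} := by
    intro s hs t ht heq
    by_contra hne
    exact (gword_incomp huv s t (hs.trans ht.symm) hne).1 heq
  rw [countLen, himg, Set.ncard_image_of_injOn hinj, card_len_bool]

end counting


/-- If every length-slice has at most one element, no exponential growth. -/
lemma not_expGrowth_of_countLen_le_one {α : Type*} {L : Set (List α)}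
    (hc : ∀ n, countLen L n ≤ 1) : ¬ ExpGrowth L := by
  rintro ⟨ε, hε, hlim⟩
  have hb : ∀ n : ℕ, (countLen L n : ℝ≥0∞) / (2 : ℝ≥0∞) ^ (ε * n) ≤
      ((2 : ℝ≥0∞) ^ (-ε)) ^ n := by
    intro n
    calc (countLen L n : ℝ≥0∞) / (2 : ℝ≥0∞) ^ (ε * n)
        ≤ 1 / (2 : ℝ≥0∞) ^ (ε * n) := by
          refine ENNReal.div_le_div_right ?_ _
          exact_mod_cast hc n
      _ = ((2 : ℝ≥0∞) ^ (-ε)) ^ n := by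
          rw [one_div, ← ENNReal.rpow_neg, neg_mul_eq_neg_mul, ENNReal.rpow_mul,
            ENNReal.rpow_natCast]
  have hlt1 : (2 : ℝ≥0∞) ^ (-ε) < 1 :=
    ENNReal.rpow_lt_one_of_one_lt_of_neg (by norm_num) (by linarith)
  have ht : Filter.Tendsto (fun n : ℕ => ((2 : ℝ≥0∞) ^ (-ε)) ^ n) atTop (nhds 0) :=
    ENNReal.tendsto_pow_atTop_nhds_zero_of_lt_one hlt1
  have h0 : Filter.limsup (fun n : ℕ => ((2 : ℝ≥0∞) ^ (-ε)) ^ n) atTop = 0 :=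
    ht.limsup_eq
  have hle := Filter.limsup_le_limsup (f := Filter.atTop) (Filter.Eventually.of_forall hb)
  rw [h0] at hle
  exact absurd (lt_of_lt_of_le hlim hle) (lt_irrefl 0)

section growth
variable {Sigma : Type*} [PartialOrder Sigma] {u v : List Sigma}

lemma gword_expGrowth (huv : ¬ LexComp (· < ·) u v) :
    ExpGrowth (Set.range (gword u v)) := by
  set m := u.length + v.length + 2 with hm
  have hmpos : 0 < m := by omega
  refine ⟨1 / (m : ℝ), by positivity, ?_⟩
  unfold ExpGrowthOrder
  have key : ∀ k : ℕ, (1 : ℝ≥0∞) ≤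
      (countLen (Set.range (gword u v)) (k * m) : ℝ≥0∞) /
        (2 : ℝ≥0∞) ^ ((1 / (m : ℝ)) * ((k * m : ℕ) : ℝ)) := by
    intro k
    have hexp : (1 / (m : ℝ)) * ((k * m : ℕ) : ℝ) = (k : ℕ) := by
      have hm0 : (m : ℝ) ≠ 0 := Nat.cast_ne_zero.mpr hmpos.ne'
      push_cast
      field_simp
    rw [hexp, ENNReal.rpow_natCast, gword_count huv k]
    have hcast : ((2 ^ k : ℕ) : ℝ≥0∞) = (2 : ℝ≥0∞) ^ k := by push_cast; rfl
    rw [hcast, ENNReal.div_self (pow_ne_zero _ two_ne_zero)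
      (ENNReal.pow_ne_top ENNReal.ofNat_ne_top)]
  refine lt_of_lt_of_le zero_lt_one (Filter.le_limsup_of_frequently_le' ?_)
  rw [Filter.frequently_atTop]
  intro N
  refine ⟨N * m, Nat.le_mul_of_pos_right N hmpos, ?_⟩
  exact key N

end growth


/-- `(L·{0})*` has exponential antichain growth iff `L` is not a chain. -/
theorem kstar_exp_antichain_iff_not_chain {Sigma : Type*} [Fintype Sigma]
    [PartialOrder Sigma] (L : Set (List Sigma)) :
    ExpAntichainGrowth extRel0
        (KStarLang ((fun l : List Sigma => l.map some ++ [none]) '' L)) ↔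
      ¬ IsChainLang (· < ·) L := by
  constructor
  · rintro ⟨L', hsub, hanti, hgrow⟩ hchain
    have hchain' := chain_kstar hchain
    refine not_expGrowth_of_countLen_le_one (fun n => ?_) hgrow
    unfold countLen
    have hss : {w ∈ L' | w.length = n}.Subsingleton := by
      intro w1 hw1 w2 hw2
      by_contra hne
      exact hanti n w1 hw1 w2 hw2 hne
        (hchain' w1 (hsub hw1.1) w2 (hsub hw2.1))
    rcases hss.eq_empty_or_singleton with h | ⟨a, h⟩ <;> rw [h] <;> simp
  · intro hnotchain
    simp only [IsChainLang, not_forall] at hnotchain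
    obtain ⟨u, hu, v, hv, huv⟩ := hnotchain
    refine ⟨Set.range (gword u v), ?_, ?_, gword_expGrowth huv⟩
    · rintro w ⟨s, rfl⟩
      exact gword_mem_kstar hu hv s
    · intro n w1 hw1 w2 hw2 hne
      obtain ⟨⟨s, rfl⟩, hl1⟩ := hw1
      obtain ⟨⟨t, rfl⟩, hl2⟩ := hw2
      have hlen : s.length = t.length := by
        rw [gword_length] at hl1 hl2
        have := hl1.trans hl2.symm
        exact Nat.eq_of_mul_eq_mul_right (by omega) this
      have hst : s ≠ t := fun hh => hne (by rw [hh])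
      exact (gword_incomp huv s t hlen hst).2
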